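/- Consider SGD with non-uniform batch sizes and learning-rate normalization: iterates y_{q+1} = y_q − η_q g_q^{(b_q)} for q = 1,…,Q, with per-step learning rate η_q = η_ℓ · b_q / B, and let A_Q = Σ_{q=1}^Q η_q = (η_ℓ/B) Σ_{q=1}^Q b_q. If 0 < η_ℓ ≤ 1 / (L(M/B + 1)), then (1/A_Q) Σ_{q=1}^Q η_q E[‖∇F(y_q)‖²] ≤ 2(F(y_1) − F*)/A_Q + η_ℓ L σ_ℓ² / B. -/

import Mathlib

open MeasureTheory Filter InnerProductSpace

lemma descent_lemma {d : ℕ} (F : EuclideanSpace ℝ (Fin d) → ℝ) (L : ℝ) (hL : 0 ≤ L)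
    (hFdiff : Differentiable ℝ F)
    (hFlip : LipschitzWith L.toNNReal (fun x => gradient F x))
    (x h : EuclideanSpace ℝ (Fin d)) :
    F (x + h) ≤ F x + ⟪gradient F x, h⟫_ℝ + L / 2 * ‖h‖ ^ 2 := by
  have hline : ∀ t : ℝ, HasDerivAt (fun t : ℝ => x + t • h) h t := by
    intro t
    simpa using ((hasDerivAt_id t).smul_const h).const_add x
  have hφ : ∀ t : ℝ, HasDerivAt (fun t => F (x + t • h))
      (⟪gradient F (x + t • h), h⟫_ℝ) t := by
    intro t
    have hg := (hFdiff (x + t • h)).hasGradientAt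
    have := hg.hasFDerivAt.comp_hasDerivAt t (hline t)
    simpa [HasGradientAt, toDual_apply_apply, Function.comp_def] using this
  set ψ : ℝ → ℝ := fun t => F (x + t • h) - t * ⟪gradient F x, h⟫_ℝ - L / 2 * ‖h‖ ^ 2 * t ^ 2
    with hψdef
  have hψ : ∀ t : ℝ, HasDerivAt ψ
      (⟪gradient F (x + t • h), h⟫_ℝ - ⟪gradient F x, h⟫_ℝ - L / 2 * ‖h‖ ^ 2 * (2 * t)) t := by
    intro t
    have h1 : HasDerivAt (fun t : ℝ => t * ⟪gradient F x, h⟫_ℝ) (⟪gradient F x, h⟫_ℝ) t := by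
      simpa using (hasDerivAt_id t).mul_const _
    have h2 : HasDerivAt (fun t : ℝ => L / 2 * ‖h‖ ^ 2 * t ^ 2) (L / 2 * ‖h‖ ^ 2 * (2 * t)) t := by
      simpa [mul_comm, mul_assoc] using ((hasDerivAt_pow 2 t).const_mul (L / 2 * ‖h‖ ^ 2))
    exact ((hφ t).sub h1).sub h2
  have hanti : AntitoneOn ψ (Set.Icc (0:ℝ) 1) := by
    apply antitoneOn_of_deriv_nonpos (convex_Icc 0 1)
    · exact fun t _ => ((hψ t).continuousAt).continuousWithinAt
    · exact fun t _ => ((hψ t).differentiableAt).differentiableWithinAt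
    · intro t ht
      rw [interior_Icc] at ht
      rw [(hψ t).deriv]
      have hlip : ‖gradient F (x + t • h) - gradient F x‖ ≤ L * (t * ‖h‖) := by
        have := hFlip.dist_le_mul (x + t • h) x
        rw [dist_eq_norm] at this
        have h2 : dist (x + t • h) x = t * ‖h‖ := by
          rw [dist_eq_norm]
          simp [norm_smul, abs_of_pos ht.1]
        calc ‖gradient F (x + t • h) - gradient F x‖ ≤ L.toNNReal * dist (x + t • h) x := by
              simpa [dist_eq_norm] using this
          _ = L * (t * ‖h‖) := by rw [h2, Real.coe_toNNReal _ hL]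
      have hip : ⟪gradient F (x + t • h), h⟫_ℝ - ⟪gradient F x, h⟫_ℝ ≤ L * t * ‖h‖ ^ 2 := by
        calc ⟪gradient F (x + t • h), h⟫_ℝ - ⟪gradient F x, h⟫_ℝ
            = ⟪gradient F (x + t • h) - gradient F x, h⟫_ℝ := by rw [inner_sub_left]
          _ ≤ ‖gradient F (x + t • h) - gradient F x‖ * ‖h‖ := real_inner_le_norm _ _
          _ ≤ L * (t * ‖h‖) * ‖h‖ := by
              apply mul_le_mul_of_nonneg_right hlip (norm_nonneg _)
          _ = L * t * ‖h‖ ^ 2 := by ring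
      nlinarith [hip]
  have := hanti (Set.left_mem_Icc.2 zero_le_one) (Set.right_mem_Icc.2 zero_le_one) zero_le_one
  simp only [hψdef] at this
  simp only [zero_smul, add_zero, one_smul, zero_mul, sub_zero, zero_pow, mul_zero,
    one_mul, one_pow, mul_one] at this
  linarith

lemma abs_coord_le_norm {d : ℕ} (x : EuclideanSpace ℝ (Fin d)) (i : Fin d) :
    |x i| ≤ ‖x‖ := by
  have h : ‖x‖ ^ 2 = ∑ j, (x j) ^ 2 := by
    rw [EuclideanSpace.norm_eq, Real.sq_sqrt (by positivity)]
    simp [Real.norm_eq_abs, sq_abs]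
  have h2 : (x i) ^ 2 ≤ ‖x‖ ^ 2 := by
    rw [h]
    exact Finset.single_le_sum (fun j _ => sq_nonneg (x j)) (Finset.mem_univ i)
  calc |x i| = Real.sqrt ((x i) ^ 2) := (Real.sqrt_sq_eq_abs _).symm
    _ ≤ Real.sqrt (‖x‖ ^ 2) := Real.sqrt_le_sqrt h2
    _ = ‖x‖ := by rw [Real.sqrt_sq (norm_nonneg _)]

lemma condexp_clm_comp {α E G : Type*} {m m0 : MeasurableSpace α} {μ : Measure α}
    [IsFiniteMeasure μ]
    [NormedAddCommGroup E] [NormedSpace ℝ E] [CompleteSpace E]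
    [NormedAddCommGroup G] [NormedSpace ℝ G] [CompleteSpace G]
    (hm : m ≤ m0) (T : E →L[ℝ] G) {f : α → E} (hf : Integrable f μ) :
    (fun ω => T ((μ[f | m]) ω)) =ᵐ[μ] μ[(fun ω => T (f ω)) | m] := by
  refine ae_eq_condExp_of_forall_setIntegral_eq hm (T.integrable_comp hf) ?_ ?_ ?_
  · intro s _ _
    exact (T.integrable_comp integrable_condExp).integrableOn
  · intro s hs hμs
    rw [T.integral_comp_comm integrable_condExp.integrableOn,
      T.integral_comp_comm hf.integrableOn, setIntegral_condExp hm hf hs]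
  · exact StronglyMeasurable.aestronglyMeasurable (T.continuous.comp_stronglyMeasurable stronglyMeasurable_condExp)

lemma integral_inner_condexp {Ω : Type*} {m0 : MeasurableSpace Ω} (μ : Measure Ω)
    [IsProbabilityMeasure μ] {d : ℕ}
    (y gg : Ω → EuclideanSpace ℝ (Fin d)) (h : EuclideanSpace ℝ (Fin d) → EuclideanSpace ℝ (Fin d))
    (hcont : Continuous h) (hy : Measurable y) (hg : Measurable gg)
    (hgint : Integrable gg μ)
    (hgsq : Integrable (fun ω => ‖gg ω‖ ^ 2) μ)
    (hhsq : Integrable (fun ω => ‖h (y ω)‖ ^ 2) μ)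
    (hub : μ[gg | MeasurableSpace.comap y inferInstance] =ᵐ[μ] fun ω => h (y ω)) :
    ∫ ω, ⟪h (y ω), gg ω⟫_ℝ ∂μ = ∫ ω, ‖h (y ω)‖ ^ 2 ∂μ := by
  set m := MeasurableSpace.comap y inferInstance with hmdef
  have hm : m ≤ m0 := hy.comap_le
  -- coordinate functions
  set hc : Fin d → Ω → ℝ := fun i ω => h (y ω) i with hcdef
  set gc : Fin d → Ω → ℝ := fun i ω => gg ω i with gcdef
  have hprojcont : ∀ i : Fin d, Continuous (fun x : EuclideanSpace ℝ (Fin d) => x i) :=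
    fun i => (EuclideanSpace.proj (𝕜 := ℝ) i).continuous
  have hcmeas : ∀ i, Measurable[m0] (hc i) := fun i =>
    (((hprojcont i).comp hcont).measurable).comp hy
  have gcmeas : ∀ i, Measurable[m0] (gc i) := fun i => ((hprojcont i).measurable).comp hg
  have hbound : ∀ ω, ∀ i, |hc i ω * gc i ω| ≤ (‖h (y ω)‖ ^ 2 + ‖gg ω‖ ^ 2) / 2 := by
    intro ω i
    simp only [hcdef, gcdef, abs_mul]
    have h1 := abs_coord_le_norm (h (y ω)) i
    have h2 := abs_coord_le_norm (gg ω) i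
    have ha := mul_self_le_mul_self (abs_nonneg (h (y ω) i)) h1
    have hb := mul_self_le_mul_self (abs_nonneg (gg ω i)) h2
    nlinarith [sq_nonneg (|h (y ω) i| - |gg ω i|)]
  have hmul_int : ∀ i, Integrable (fun ω => hc i ω * gc i ω) μ := by
    intro i
    refine Integrable.mono' ((hhsq.add hgsq).div_const 2) ?_ ?_
    · exact ((hcmeas i).mul (gcmeas i)).aestronglyMeasurable
    · exact Filter.Eventually.of_forall fun ω => by
        simpa [Real.norm_eq_abs, abs_mul] using hbound ω i
  have hsq_int : ∀ i, Integrable (fun ω => hc i ω * hc i ω) μ := by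
    intro i
    refine Integrable.mono' hhsq ?_ ?_
    · exact ((hcmeas i).mul (hcmeas i)).aestronglyMeasurable
    · refine Filter.Eventually.of_forall fun ω => ?_
      have h1 := abs_coord_le_norm (h (y ω)) i
      simp only [hcdef, Real.norm_eq_abs, abs_mul]
      nlinarith [mul_self_le_mul_self (abs_nonneg (h (y ω) i)) h1]
  have gc_int : ∀ i, Integrable (gc i) μ := fun i =>
    (EuclideanSpace.proj (𝕜 := ℝ) i).integrable_comp hgint
  -- strong measurability of hc i wrt m
  have hym : Measurable[m] y := fun s hs => ⟨s, hs, rfl⟩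
  have hcm : ∀ i, StronglyMeasurable[m] (hc i) := by
    intro i
    exact (((hprojcont i).comp hcont).measurable.comp hym).stronglyMeasurable
  -- coordinatewise identity
  have hcoord : ∀ i, ∫ ω, hc i ω * gc i ω ∂μ = ∫ ω, hc i ω * hc i ω ∂μ := by
    intro i
    have step1 : μ[(fun ω => hc i ω * gc i ω) | m] =ᵐ[μ] fun ω => hc i ω * ((μ[gc i | m]) ω) :=
      condExp_mul_of_stronglyMeasurable_left (hcm i) (hmul_int i) (gc_int i)
    have step2 : μ[gc i | m] =ᵐ[μ] fun ω => hc i ω := by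
      have hcomm := condexp_clm_comp hm (EuclideanSpace.proj (𝕜 := ℝ) i) hgint
      refine hcomm.symm.trans ?_
      filter_upwards [hub] with ω hω
      simp [hω, hcdef]
    have step3 : μ[(fun ω => hc i ω * gc i ω) | m] =ᵐ[μ] fun ω => hc i ω * hc i ω := by
      refine step1.trans ?_
      filter_upwards [step2] with ω hω
      rw [hω]
    calc ∫ ω, hc i ω * gc i ω ∂μ = ∫ ω, (μ[(fun ω => hc i ω * gc i ω) | m]) ω ∂μ :=
          (integral_condExp hm).symm
      _ = ∫ ω, hc i ω * hc i ω ∂μ := integral_congr_ae step3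
  -- sum over coordinates
  have lhs_eq : ∫ ω, ⟪h (y ω), gg ω⟫_ℝ ∂μ = ∑ i, ∫ ω, hc i ω * gc i ω ∂μ := by
    rw [← integral_finset_sum _ (fun i _ => hmul_int i)]
    refine integral_congr_ae (Filter.Eventually.of_forall fun ω => ?_)
    simp [PiLp.inner_apply, RCLike.inner_apply, hcdef, gcdef, mul_comm]
  have rhs_eq : ∫ ω, ‖h (y ω)‖ ^ 2 ∂μ = ∑ i, ∫ ω, hc i ω * hc i ω ∂μ := by
    rw [← integral_finset_sum _ (fun i _ => hsq_int i)]
    refine integral_congr_ae (Filter.Eventually.of_forall fun ω => ?_)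
    show ‖h (y ω)‖ ^ 2 = ∑ i, hc i ω * hc i ω
    rw [← real_inner_self_eq_norm_sq]
    simp only [PiLp.inner_apply, RCLike.inner_apply, hcdef, conj_trivial]
  rw [lhs_eq, rhs_eq]
  exact Finset.sum_congr rfl fun i _ => hcoord i

/-- **SGD with non-uniform batch sizes and learning-rate normalization.**
With iterates `y_{q+1} = y_q − η_q g_q^{(b_q)}`, per-step learning rate `η_q = ηℓ b_q / B`,
`A_Q = ∑_{q=1}^Q η_q`, unbiased mini-batch gradients with weak-growth variance bound
`σℓ²/b_q + (M/b_q)‖∇F(y_q)‖²` conditionally on `y_q`, and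
`0 < ηℓ ≤ 1/(L(M/B + 1))`, one has
`(1/A_Q) ∑_{q=1}^Q η_q E[‖∇F(y_q)‖²] ≤ 2(F(y₁) − F*)/A_Q + ηℓ L σℓ² / B`. -/
theorem sgd_lr_norm_convergence
    {Ω : Type*} [MeasurableSpace Ω] (μ : Measure Ω) [IsProbabilityMeasure μ]
    (d : ℕ) (F : EuclideanSpace ℝ (Fin d) → ℝ) (L : ℝ) (hL : 0 < L)
    (hFdiff : Differentiable ℝ F)
    (hFlip : LipschitzWith L.toNNReal (fun x => gradient F x))
    (Fstar : ℝ) (hbdd : BddBelow (Set.range F)) (hFstar : Fstar = ⨅ x, F x)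
    (B : ℕ) (hB : 1 ≤ B) (ηl : ℝ) (σl M : ℝ) (hσl : 0 ≤ σl ^ 2) (hM : 0 ≤ M)
    (hηl : 0 < ηl ∧ ηl ≤ 1 / (L * (M / B + 1)))
    (Q : ℕ) (hQ : 1 ≤ Q)
    (b : ℕ → ℕ) (hb : ∀ q, 1 ≤ b q ∧ b q ≤ B)
    (η : ℕ → ℝ) (hηdef : ∀ q, η q = ηl * (b q : ℝ) / B)
    (A : ℝ) (hA : A = ∑ q ∈ Finset.Icc 1 Q, η q)
    (y : ℕ → Ω → EuclideanSpace ℝ (Fin d)) (y1 : EuclideanSpace ℝ (Fin d))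
    (g : ℕ → Ω → EuclideanSpace ℝ (Fin d))
    (hymeas : ∀ q, Measurable (y q)) (hgmeas : ∀ q, Measurable (g q))
    (hgint : ∀ q, Integrable (g q) μ)
    (hgsqint : ∀ q, Integrable (fun ω => ‖g q ω - gradient F (y q ω)‖ ^ 2) μ)
    (hFyint : ∀ q, Integrable (fun ω => F (y q ω)) μ)
    (hgradsqint : ∀ q, Integrable (fun ω => ‖gradient F (y q ω)‖ ^ 2) μ)
    (hy1 : ∀ ω, y 1 ω = y1)
    (hrec : ∀ q, 1 ≤ q → q ≤ Q → ∀ ω, y (q + 1) ω = y q ω - η q • g q ω)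
    (hunbiased : ∀ q, 1 ≤ q → q ≤ Q →
      μ[g q | MeasurableSpace.comap (y q) inferInstance]
        =ᵐ[μ] fun ω => gradient F (y q ω))
    (hvar : ∀ q, 1 ≤ q → q ≤ Q →
      μ[(fun ω => ‖g q ω - gradient F (y q ω)‖ ^ 2) |
          MeasurableSpace.comap (y q) inferInstance]
        ≤ᵐ[μ] fun ω => σl ^ 2 / b q + (M / b q) * ‖gradient F (y q ω)‖ ^ 2) :
    (1 / A) * ∑ q ∈ Finset.Icc 1 Q, η q * (∫ ω, ‖gradient F (y q ω)‖ ^ 2 ∂μ)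
      ≤ 2 * (F y1 - Fstar) / A + ηl * L * σl ^ 2 / B := by
  obtain ⟨hηlpos, hηlle⟩ := hηl
  have hBpos : (0:ℝ) < B := by exact_mod_cast hB
  set I : ℕ → ℝ := fun q => ∫ ω, ‖gradient F (y q ω)‖ ^ 2 ∂μ with hIdef
  set E : ℕ → ℝ := fun q => ∫ ω, F (y q ω) ∂μ with hEdef
  set K : ℝ := ηl * L * σl ^ 2 / (2 * B) with hKdef
  have hInonneg : ∀ q, 0 ≤ I q := fun q =>
    integral_nonneg fun ω => sq_nonneg _
  have hηpos : ∀ q, 0 < η q := by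
    intro q
    rw [hηdef q]
    have : (0:ℝ) < b q := by exact_mod_cast (hb q).1
    positivity
  -- integrability facts
  have hgsq2 : ∀ q, Integrable (fun ω => ‖g q ω‖ ^ 2) μ := by
    intro q
    refine Integrable.mono' (((hgsqint q).const_mul 2).add ((hgradsqint q).const_mul 2)) ?_ ?_
    · exact ((hgmeas q).norm.pow_const 2).aestronglyMeasurable
    · refine Eventually.of_forall fun ω => ?_
      have h1 : ‖g q ω‖ ≤ ‖g q ω - gradient F (y q ω)‖ + ‖gradient F (y q ω)‖ := by
        simpa using norm_add_le (g q ω - gradient F (y q ω)) (gradient F (y q ω))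
      show ‖‖g q ω‖ ^ 2‖ ≤ 2 * ‖g q ω - gradient F (y q ω)‖ ^ 2
        + 2 * ‖gradient F (y q ω)‖ ^ 2
      rw [Real.norm_eq_abs, abs_of_nonneg (sq_nonneg _)]
      nlinarith [pow_le_pow_left₀ (norm_nonneg (g q ω)) h1 2,
        sq_nonneg (‖g q ω - gradient F (y q ω)‖ - ‖gradient F (y q ω)‖)]
  have hinnerint : ∀ q, Integrable (fun ω => ⟪gradient F (y q ω), g q ω⟫_ℝ) μ := by
    intro q
    refine Integrable.mono' (((hgradsqint q).add (hgsq2 q)).div_const 2) ?_ ?_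
    · exact ((hFlip.continuous.measurable.comp (hymeas q)).inner (hgmeas q)).aestronglyMeasurable
    · refine Eventually.of_forall fun ω => ?_
      show ‖⟪gradient F (y q ω), g q ω⟫_ℝ‖
        ≤ (‖gradient F (y q ω)‖ ^ 2 + ‖g q ω‖ ^ 2) / 2
      rw [Real.norm_eq_abs]
      have h1 := abs_real_inner_le_norm (gradient F (y q ω)) (g q ω)
      nlinarith [sq_nonneg (‖gradient F (y q ω)‖ - ‖g q ω‖)]
  -- per-step inequality
  have hstep : ∀ q, 1 ≤ q → q ≤ Q → η q / 2 * I q ≤ E q - E (q + 1) + η q * K := by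
    intro q hq1 hqQ
    have hm : MeasurableSpace.comap (y q) inferInstance ≤ _ := (hymeas q).comap_le
    -- Step B : ∫ inner = I q
    have hP : ∫ ω, ⟪gradient F (y q ω), g q ω⟫_ℝ ∂μ = I q := by
      exact integral_inner_condexp μ (y q) (g q) (gradient F) hFlip.continuous
        (hymeas q) (hgmeas q) (hgint q) (hgsq2 q) (hgradsqint q) (hunbiased q hq1 hqQ)
    -- Step C : ∫ ‖g‖² = V + 2P − I
    have hG : ∫ ω, ‖g q ω‖ ^ 2 ∂μ
        = (∫ ω, ‖g q ω - gradient F (y q ω)‖ ^ 2 ∂μ) + I q := by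
      have hpt : ∀ ω, ‖g q ω‖ ^ 2 = ‖g q ω - gradient F (y q ω)‖ ^ 2
          + 2 * ⟪gradient F (y q ω), g q ω⟫_ℝ - ‖gradient F (y q ω)‖ ^ 2 := by
        intro ω
        have := norm_sub_sq_real (g q ω) (gradient F (y q ω))
        have hc : ⟪g q ω, gradient F (y q ω)⟫_ℝ = ⟪gradient F (y q ω), g q ω⟫_ℝ :=
          real_inner_comm _ _
        linarith [this, hc]
      calc ∫ ω, ‖g q ω‖ ^ 2 ∂μ
          = ∫ ω, (‖g q ω - gradient F (y q ω)‖ ^ 2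
            + 2 * ⟪gradient F (y q ω), g q ω⟫_ℝ - ‖gradient F (y q ω)‖ ^ 2) ∂μ :=
            integral_congr_ae (Eventually.of_forall fun ω => hpt ω)
        _ = (∫ ω, ‖g q ω - gradient F (y q ω)‖ ^ 2 ∂μ)
            + 2 * (∫ ω, ⟪gradient F (y q ω), g q ω⟫_ℝ ∂μ) - I q := by
            have hi1 : Integrable (fun ω => ‖g q ω - gradient F (y q ω)‖ ^ 2
                + 2 * ⟪gradient F (y q ω), g q ω⟫_ℝ) μ :=
              (hgsqint q).add ((hinnerint q).const_mul 2)
            rw [integral_sub hi1 (hgradsqint q),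
              integral_add (hgsqint q) ((hinnerint q).const_mul 2), integral_const_mul]
        _ = (∫ ω, ‖g q ω - gradient F (y q ω)‖ ^ 2 ∂μ) + I q := by rw [hP]; ring
    -- Step D : variance bound
    have hbq : (0:ℝ) < b q := by exact_mod_cast (hb q).1
    have hV : ∫ ω, ‖g q ω - gradient F (y q ω)‖ ^ 2 ∂μ
        ≤ σl ^ 2 / b q + (M / b q) * I q := by
      have h1 : ∫ ω, ‖g q ω - gradient F (y q ω)‖ ^ 2 ∂μ
          = ∫ ω, (μ[(fun ω => ‖g q ω - gradient F (y q ω)‖ ^ 2) |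
              MeasurableSpace.comap (y q) inferInstance]) ω ∂μ :=
        (integral_condExp hm).symm
      rw [h1]
      calc ∫ ω, (μ[(fun ω => ‖g q ω - gradient F (y q ω)‖ ^ 2) |
              MeasurableSpace.comap (y q) inferInstance]) ω ∂μ
          ≤ ∫ ω, (σl ^ 2 / b q + (M / b q) * ‖gradient F (y q ω)‖ ^ 2) ∂μ :=
            integral_mono_ae integrable_condExp
              ((integrable_const _).add ((hgradsqint q).const_mul _)) (hvar q hq1 hqQ)
        _ = σl ^ 2 / b q + (M / b q) * I q := by
            rw [integral_add (integrable_const _) ((hgradsqint q).const_mul _),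
              integral_const, integral_const_mul]
            simp [measure_univ, hIdef]
    -- Step A : descent inequality integrated
    have hdesc : E (q + 1) ≤ E q - η q * (∫ ω, ⟪gradient F (y q ω), g q ω⟫_ℝ ∂μ)
        + L / 2 * (η q) ^ 2 * (∫ ω, ‖g q ω‖ ^ 2 ∂μ) := by
      have hpt : ∀ ω, F (y (q + 1) ω) ≤ F (y q ω) - η q * ⟪gradient F (y q ω), g q ω⟫_ℝ
          + L / 2 * (η q) ^ 2 * ‖g q ω‖ ^ 2 := by
        intro ω
        have := descent_lemma F L hL.le hFdiff hFlip (y q ω) (-(η q) • g q ω)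
        rw [hrec q hq1 hqQ ω]
        have he1 : y q ω + -(η q) • g q ω = y q ω - η q • g q ω := by
          rw [neg_smul, ← sub_eq_add_neg]
        rw [he1] at this
        have he2 : ⟪gradient F (y q ω), -(η q) • g q ω⟫_ℝ
            = -(η q) * ⟪gradient F (y q ω), g q ω⟫_ℝ := real_inner_smul_right _ _ _
        have he3 : ‖-(η q) • g q ω‖ ^ 2 = (η q) ^ 2 * ‖g q ω‖ ^ 2 := by
          rw [norm_smul]
          simp [mul_pow, sq_abs]
        rw [he2, he3] at this
        linarith
      calc E (q + 1) ≤ ∫ ω, (F (y q ω) - η q * ⟪gradient F (y q ω), g q ω⟫_ℝ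
            + L / 2 * (η q) ^ 2 * ‖g q ω‖ ^ 2) ∂μ :=
            integral_mono (hFyint (q + 1))
              (((hFyint q).sub ((hinnerint q).const_mul _)).add ((hgsq2 q).const_mul _))
              fun ω => hpt ω
        _ = E q - η q * (∫ ω, ⟪gradient F (y q ω), g q ω⟫_ℝ ∂μ)
            + L / 2 * (η q) ^ 2 * (∫ ω, ‖g q ω‖ ^ 2 ∂μ) := by
            have hi1 : Integrable (fun ω => F (y q ω)
                - η q * ⟪gradient F (y q ω), g q ω⟫_ℝ) μ :=
              (hFyint q).sub ((hinnerint q).const_mul _)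
            rw [integral_add hi1 ((hgsq2 q).const_mul _),
              integral_sub (hFyint q) ((hinnerint q).const_mul _),
              integral_const_mul, integral_const_mul]
    rw [hP, hG] at hdesc
    -- arithmetic
    have hbB : (b q : ℝ) ≤ B := by exact_mod_cast (hb q).2
    have hkey : L * η q * (1 + M / b q) ≤ 1 := by
      have he : L * η q * (1 + M / b q) = L * ηl * ((b q : ℝ) + M) / B := by
        rw [hηdef q]; field_simp
      have hden : 0 < L * (M / B + 1) := by positivity
      have h2 : ηl * (L * (M / B + 1)) ≤ 1 := by
        rw [← le_div_iff₀ hden]; exact hηlle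
      have h3 : L * ηl * ((b q : ℝ) + M) / B ≤ L * ηl * ((B : ℝ) + M) / B := by
        gcongr
      have h4 : L * ηl * ((B : ℝ) + M) / B = ηl * (L * (M / B + 1)) := by
        field_simp; ring
      rw [he]
      exact h3.trans (by rw [h4]; exact h2)
    have hcs : L / 2 * (η q) ^ 2 * (σl ^ 2 / b q) = η q * K := by
      rw [hηdef q, hKdef]
      field_simp
    have hc0 : 0 ≤ L / 2 * (η q) ^ 2 :=
      mul_nonneg (div_nonneg hL.le (by norm_num)) (sq_nonneg _)
    have hmul1 : L / 2 * (η q) ^ 2 * (∫ ω, ‖g q ω - gradient F (y q ω)‖ ^ 2 ∂μ)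
        ≤ L / 2 * (η q) ^ 2 * (σl ^ 2 / b q + (M / b q) * I q) :=
      mul_le_mul_of_nonneg_left hV hc0
    have hmul2 : (L * η q * (1 + M / b q)) * (η q / 2 * I q) ≤ 1 * (η q / 2 * I q) :=
      mul_le_mul_of_nonneg_right hkey
        (mul_nonneg (div_nonneg (hηpos q).le (by norm_num)) (hInonneg q))
    linarith [hdesc, hmul1, hmul2, hcs]
  -- sum up
  have htel : ∑ q ∈ Finset.Icc 1 Q, (E q - E (q + 1)) = E 1 - E (Q + 1) := by
    rw [← Finset.Ico_add_one_right_eq_Icc, Finset.sum_Ico_eq_sum_range]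
    have h := Finset.sum_range_sub' (fun i => E (1 + i)) Q
    rw [Nat.add_comm 1 Q] at h
    exact h
  have hsum : (∑ q ∈ Finset.Icc 1 Q, η q / 2 * I q)
      ≤ E 1 - E (Q + 1) + A * K := by
    calc (∑ q ∈ Finset.Icc 1 Q, η q / 2 * I q)
        ≤ ∑ q ∈ Finset.Icc 1 Q, (E q - E (q + 1) + η q * K) := by
          refine Finset.sum_le_sum fun q hq => ?_
          obtain ⟨hq1, hqQ⟩ := Finset.mem_Icc.mp hq
          exact hstep q hq1 hqQ
      _ = (∑ q ∈ Finset.Icc 1 Q, (E q - E (q + 1)))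
          + (∑ q ∈ Finset.Icc 1 Q, η q) * K := by
          rw [Finset.sum_add_distrib, Finset.sum_mul]
      _ = E 1 - E (Q + 1) + A * K := by rw [htel, hA]
  have hE1 : E 1 = F y1 := by
    have : (fun ω => F (y 1 ω)) = fun _ : Ω => F y1 := by
      funext ω; rw [hy1 ω]
    simp only [hEdef, this, integral_const, measure_univ, probReal_univ, ENNReal.toReal_one, smul_eq_mul,
      one_mul]
  have hEQ : Fstar ≤ E (Q + 1) := by
    have hlb : ∀ x, Fstar ≤ F x := fun x => hFstar ▸ ciInf_le hbdd x
    calc Fstar = ∫ _ω, Fstar ∂μ := by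
          simp [integral_const, measure_univ]
      _ ≤ E (Q + 1) := integral_mono (integrable_const _) (hFyint (Q + 1))
          fun ω => hlb (y (Q + 1) ω)
  have hApos : 0 < A := by
    rw [hA]
    exact Finset.sum_pos (fun q _ => hηpos q)
      ⟨1, Finset.mem_Icc.mpr ⟨le_refl 1, hQ⟩⟩
  have hhalf : (∑ q ∈ Finset.Icc 1 Q, η q / 2 * I q)
      = (∑ q ∈ Finset.Icc 1 Q, η q * I q) / 2 := by
    rw [Finset.sum_div]
    exact Finset.sum_congr rfl fun q _ => by ring
  have hS : (∑ q ∈ Finset.Icc 1 Q, η q * I q)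
      ≤ 2 * (F y1 - Fstar) + A * (2 * K) := by
    rw [hhalf] at hsum
    linarith
  have h2 : (1 / A) * (∑ q ∈ Finset.Icc 1 Q, η q * I q)
      ≤ (1 / A) * (2 * (F y1 - Fstar) + A * (2 * K)) := by
    apply mul_le_mul_of_nonneg_left hS
    positivity
  have h3 : (1 / A) * (2 * (F y1 - Fstar) + A * (2 * K))
      = 2 * (F y1 - Fstar) / A + 2 * K := by
    field_simp
  have h4 : 2 * K = ηl * L * σl ^ 2 / B := by
    rw [hKdef]
    field_simp
  calc (1 / A) * ∑ q ∈ Finset.Icc 1 Q, η q * (∫ ω, ‖gradient F (y q ω)‖ ^ 2 ∂μ)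
      = (1 / A) * (∑ q ∈ Finset.Icc 1 Q, η q * I q) := rfl
    _ ≤ 2 * (F y1 - Fstar) / A + 2 * K := h2.trans_eq h3
    _ = 2 * (F y1 - Fstar) / A + ηl * L * σl ^ 2 / B := by rw [h4]
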